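/- arXiv:math/0107199 — 3 statements merged into one kernel-verified Lean document; each statement's English description precedes it below -/
import Mathlib

section
/- The static hysteresis area equals 3/2: ∫_{-λ_c}^{λ_c} (X*₊(λ) - X*₋(λ)) dλ = 3/2, where for |λ| < λ_c, X*₋(λ) < X*₀(λ) < X*₊(λ) denote the three real roots of x - x³ + λ = 0. -/
noncomputable def hystP (l : ℝ) : ℝ :=
  (2 * Real.sqrt 3 / 3) * Real.cos (Real.arccos (l * (3 * Real.sqrt 3) / 2) / 3)

lemma hyst_s_sq : Real.sqrt 3 ^ 2 = 3 := Real.sq_sqrt (by norm_num)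

lemma hyst_s_cube : Real.sqrt 3 ^ 3 = 3 * Real.sqrt 3 := by
  have h := hyst_s_sq
  calc Real.sqrt 3 ^ 3 = Real.sqrt 3 ^ 2 * Real.sqrt 3 := by ring
    _ = 3 * Real.sqrt 3 := by rw [h]

lemma hyst_s_pos : (0:ℝ) < Real.sqrt 3 := Real.sqrt_pos.mpr (by norm_num)

lemma hystP_continuous : Continuous hystP := by
  unfold hystP
  exact continuous_const.mul (Real.continuous_cos.comp
    ((Real.continuous_arccos.comp (by fun_prop)).div_const 3))

lemma hyst_c_eq : (2 : ℝ) / (3 * Real.sqrt 3) = 2 * Real.sqrt 3 / 9 := by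
  rw [div_eq_div_iff (by positivity) (by norm_num)]
  linear_combination (-6 : ℝ) * hyst_s_sq

lemma hystP_root {l : ℝ} (h : |l| ≤ 2 / (3 * Real.sqrt 3)) :
    (hystP l) ^ 3 - hystP l = l := by
  have hs := hyst_s_sq
  have h3s := hyst_s_cube
  have hsp := hyst_s_pos
  have hz : |l * (3 * Real.sqrt 3) / 2| ≤ 1 := by
    rw [abs_div, abs_mul, abs_of_nonneg (by positivity : (0:ℝ) ≤ 3 * Real.sqrt 3),
      abs_of_nonneg (by norm_num : (0:ℝ) ≤ 2), div_le_one (by norm_num)]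
    calc |l| * (3 * Real.sqrt 3) ≤ (2 / (3 * Real.sqrt 3)) * (3 * Real.sqrt 3) :=
          mul_le_mul_of_nonneg_right h (by positivity)
      _ = 2 := by field_simp
  rw [abs_le] at hz
  have hca : Real.cos (Real.arccos (l * (3 * Real.sqrt 3) / 2)) = l * (3 * Real.sqrt 3) / 2 :=
    Real.cos_arccos hz.1 hz.2
  have h3 : 3 * (Real.arccos (l * (3 * Real.sqrt 3) / 2) / 3) =
      Real.arccos (l * (3 * Real.sqrt 3) / 2) := by ring
  have htriple := Real.cos_three_mul (Real.arccos (l * (3 * Real.sqrt 3) / 2) / 3)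
  rw [h3, hca] at htriple
  unfold hystP
  set C := Real.cos (Real.arccos (l * (3 * Real.sqrt 3) / 2) / 3) with hC
  linear_combination (8 * C ^ 3 / 27) * h3s + (l / 3) * hs - (2 * Real.sqrt 3 / 9) * htriple

lemma hystP_mem {l : ℝ} (h : |l| ≤ 2 / (3 * Real.sqrt 3)) :
    Real.sqrt 3 / 3 ≤ hystP l ∧ hystP l ≤ 2 * Real.sqrt 3 / 3 := by
  have hsp := hyst_s_pos
  set t := Real.arccos (l * (3 * Real.sqrt 3) / 2) / 3 with ht
  have ht0 : 0 ≤ t := by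
    have := Real.arccos_nonneg (l * (3 * Real.sqrt 3) / 2)
    rw [ht]; linarith
  have htpi : t ≤ Real.pi / 3 := by
    have := Real.arccos_le_pi (l * (3 * Real.sqrt 3) / 2)
    rw [ht]; linarith
  have hcos_lb : (1:ℝ)/2 ≤ Real.cos t := by
    have := Real.cos_le_cos_of_nonneg_of_le_pi ht0
      (by linarith [Real.pi_pos] : Real.pi / 3 ≤ Real.pi) htpi
    rw [Real.cos_pi_div_three] at this
    exact this
  have hcos_ub : Real.cos t ≤ 1 := Real.cos_le_one t
  unfold hystP
  rw [← ht]
  constructor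
  · nlinarith [hsp, hcos_lb]
  · nlinarith [hsp, hcos_ub]

/-- Injectivity of `x ↦ x^3 - x` on `[√3/3, ∞)`. -/
lemma hyst_inj {a b : ℝ} (ha : Real.sqrt 3 / 3 ≤ a) (hb : Real.sqrt 3 / 3 ≤ b)
    (hab : a ^ 3 - a = b ^ 3 - b) : a = b := by
  have hs := hyst_s_sq
  have hsp := hyst_s_pos
  have h0 : (0:ℝ) < Real.sqrt 3 / 3 := by positivity
  have key : ∀ x y : ℝ, Real.sqrt 3 / 3 ≤ x → Real.sqrt 3 / 3 ≤ y → x < y →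
      x ^ 3 - x = y ^ 3 - y → False := by
    intro x y hx hy hxy hexy
    have hfac : (x - y) * (x ^ 2 + x * y + y ^ 2 - 1) = 0 := by linear_combination hexy
    have he : x ^ 2 + x * y + y ^ 2 = 1 := by
      rcases mul_eq_zero.mp hfac with h' | h'
      · linarith
      · linarith
    have h1 : Real.sqrt 3 / 3 * (Real.sqrt 3 / 3) ≤ x * y :=
      mul_le_mul hx hy h0.le (h0.le.trans hx)
    have h2 : Real.sqrt 3 / 3 * (Real.sqrt 3 / 3) ≤ x * x :=
      mul_le_mul hx hx h0.le (h0.le.trans hx)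
    have h3 : x * y < y * y := mul_lt_mul_of_pos_right hxy (h0.trans_le hy)
    nlinarith [hs, h1, h2, h3, he]
  by_contra hne
  rcases lt_or_gt_of_ne hne with hlt | hlt
  · exact key a b ha hb hlt hab
  · exact key b a hb ha hlt hab.symm

/-- For three distinct roots, the extreme roots lie beyond `±√3/3`. -/
lemma hyst_roots_loc {l r1 r2 r3 : ℝ} (h12 : r1 < r2) (h23 : r2 < r3)
    (e1 : r1 ^ 3 - r1 = l) (e2 : r2 ^ 3 - r2 = l) (e3 : r3 ^ 3 - r3 = l) :
    r1 < -(Real.sqrt 3 / 3) ∧ Real.sqrt 3 / 3 < r3 := by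
  have hs := hyst_s_sq
  have hsp := hyst_s_pos
  have e12 : r1 ^ 2 + r1 * r2 + r2 ^ 2 = 1 := by
    have h : (r1 - r2) * (r1 ^ 2 + r1 * r2 + r2 ^ 2 - 1) = 0 := by
      linear_combination e1 - e2
    rcases mul_eq_zero.mp h with h' | h'
    · linarith
    · linarith
  have e23 : r2 ^ 2 + r2 * r3 + r3 ^ 2 = 1 := by
    have h : (r2 - r3) * (r2 ^ 2 + r2 * r3 + r3 ^ 2 - 1) = 0 := by
      linear_combination e2 - e3
    rcases mul_eq_zero.mp h with h' | h'
    · linarith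
    · linarith
  have e13 : r1 ^ 2 + r1 * r3 + r3 ^ 2 = 1 := by
    have h : (r1 - r3) * (r1 ^ 2 + r1 * r3 + r3 ^ 2 - 1) = 0 := by
      linear_combination e1 - e3
    rcases mul_eq_zero.mp h with h' | h'
    · linarith
    · linarith
  have hsum : r1 + r2 + r3 = 0 := by
    have h : (r1 - r2) * (r1 + r2 + r3) = 0 := by linear_combination e13 - e23
    rcases mul_eq_zero.mp h with h' | h'
    · linarith
    · linarith
  constructor
  · have hr2 : r2 < -r1 / 2 := by linarith
    have h1 : 1 < 3 * r1 ^ 2 := by nlinarith [e12, h12, hr2]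
    have hr1neg : r1 < 0 := by nlinarith [hr2, h12]
    nlinarith [h1, hr1neg, hsp, hs]
  · have hr2 : -r3 / 2 < r2 := by linarith
    have h1 : 1 < 3 * r3 ^ 2 := by nlinarith [e23, h23, hr2]
    have hr3pos : 0 < r3 := by nlinarith [hr2, h23]
    nlinarith [h1, hr3pos, hsp, hs]

lemma hystP_integral :
    ∫ l in (-(2 / (3 * Real.sqrt 3)))..(2 / (3 * Real.sqrt 3)), hystP l = 3 / 4 := by
  have hs := hyst_s_sq
  have h3s := hyst_s_cube
  have hsp := hyst_s_pos
  set u : ℝ := Real.sqrt 3 / 3 with hu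
  set v : ℝ := 2 * Real.sqrt 3 / 3 with hv
  have hc := hyst_c_eq
  have hφu : u ^ 3 - u = -(2 / (3 * Real.sqrt 3)) := by
    rw [hc, hu]; linear_combination (1/27 : ℝ) * h3s
  have hφv : v ^ 3 - v = 2 / (3 * Real.sqrt 3) := by
    rw [hc, hv]; linear_combination (8/27 : ℝ) * h3s
  have huv : u ≤ v := by rw [hu, hv]; linarith
  have hderiv : ∀ x ∈ Set.uIcc u v, HasDerivAt (fun x : ℝ => x ^ 3 - x) (3 * x ^ 2 - 1) x := by
    intro x _
    have h1 : HasDerivAt (fun x : ℝ => x ^ 3) (3 * x ^ 2) x := by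
      simpa using hasDerivAt_pow 3 x
    exact h1.sub (hasDerivAt_id' x)
  have hcont' : ContinuousOn (fun x : ℝ => 3 * x ^ 2 - 1) (Set.uIcc u v) := by fun_prop
  have hsub := intervalIntegral.integral_comp_smul_deriv hderiv hcont' hystP_continuous
  simp only [Function.comp] at hsub
  rw [hφu, hφv] at hsub
  rw [← hsub]
  have hEq : Set.EqOn (fun x : ℝ => (3 * x ^ 2 - 1) • hystP (x ^ 3 - x))
      (fun x : ℝ => 3 * x ^ 3 - x) (Set.uIcc u v) := by
    intro x hx
    rw [Set.uIcc_of_le huv] at hx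
    obtain ⟨hxu, hxv⟩ := hx
    have hxu' : Real.sqrt 3 / 3 ≤ x := hxu
    have hxv' : x ≤ 2 * Real.sqrt 3 / 3 := hxv
    have hid1 : x ^ 3 - x + 2 * Real.sqrt 3 / 9 =
        (x - Real.sqrt 3 / 3) ^ 2 * (x + 2 * Real.sqrt 3 / 3) := by
      linear_combination (x / 3) * hs - (2/27 : ℝ) * h3s
    have hid2 : 2 * Real.sqrt 3 / 9 - (x ^ 3 - x) =
        (2 * Real.sqrt 3 / 3 - x) * (x + Real.sqrt 3 / 3) ^ 2 := by
      linear_combination (-(x / 3)) * hs - (2/27 : ℝ) * h3s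
    have habs : |x ^ 3 - x| ≤ 2 / (3 * Real.sqrt 3) := by
      rw [hc, abs_le]
      constructor
      · have hpos : (0:ℝ) ≤ (x - Real.sqrt 3 / 3) ^ 2 * (x + 2 * Real.sqrt 3 / 3) :=
          mul_nonneg (sq_nonneg _) (by linarith)
        linarith [hid1, hpos]
      · have hpos : (0:ℝ) ≤ (2 * Real.sqrt 3 / 3 - x) * (x + Real.sqrt 3 / 3) ^ 2 :=
          mul_nonneg (by linarith) (sq_nonneg _)
        linarith [hid2, hpos]
    have hmem := hystP_mem habs
    have hroot := hystP_root habs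
    have hPx : hystP (x ^ 3 - x) = x := hyst_inj hmem.1 hxu' hroot
    simp only [hPx, smul_eq_mul]
    ring
  rw [intervalIntegral.integral_congr hEq]
  have hint1 : IntervalIntegrable (fun x : ℝ => 3 * x ^ 3) MeasureTheory.volume u v := by
    apply Continuous.intervalIntegrable; fun_prop
  have hint2 : IntervalIntegrable (fun x : ℝ => x) MeasureTheory.volume u v := by
    apply Continuous.intervalIntegrable; fun_prop
  have hsplit : (fun x : ℝ => 3 * x ^ 3 - x) =
      fun x : ℝ => (fun x : ℝ => 3 * x ^ 3) x - (fun x : ℝ => x) x := rfl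
  rw [hsplit, intervalIntegral.integral_sub hint1 hint2]
  have h1 : ∫ x in u..v, 3 * x ^ 3 = 3 * ((v ^ 4 - u ^ 4) / 4) := by
    rw [intervalIntegral.integral_const_mul]
    norm_num [integral_pow]
  have h2 : ∫ x in u..v, x = (v ^ 2 - u ^ 2) / 2 := integral_id
  rw [h1, h2, hu, hv]
  have h4 : Real.sqrt 3 ^ 4 = 9 := by
    calc Real.sqrt 3 ^ 4 = (Real.sqrt 3 ^ 2) ^ 2 := by ring
      _ = 9 := by rw [hs]; norm_num
  linear_combination (5/36 : ℝ) * h4 - (1/6 : ℝ) * hs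

/-- The static hysteresis area: if for each `|λ| < λ_c` the three real roots of
`x - x³ + λ = 0` are `Xm λ < X0 λ < Xp λ`, then `∫_{-λ_c}^{λ_c} (Xp - Xm) dλ = 3/2`. -/
theorem static_hysteresis_area
    (Xm X0 Xp : ℝ → ℝ)
    (hroots : ∀ lam : ℝ, |lam| < 2 / (3 * Real.sqrt 3) →
      Xm lam < X0 lam ∧ X0 lam < Xp lam ∧
      Xm lam - (Xm lam) ^ 3 + lam = 0 ∧
      X0 lam - (X0 lam) ^ 3 + lam = 0 ∧
      Xp lam - (Xp lam) ^ 3 + lam = 0) :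
    ∫ lam in (-(2 / (3 * Real.sqrt 3)))..(2 / (3 * Real.sqrt 3)),
      (Xp lam - Xm lam) = 3 / 2 := by
  have hsp := hyst_s_pos
  set c : ℝ := 2 / (3 * Real.sqrt 3) with hcdef
  have hcpos : 0 < c := by positivity
  have hXp : ∀ lam : ℝ, |lam| < c → Xp lam = hystP lam := by
    intro lam hlam
    obtain ⟨h1, h2, e1, e2, e3⟩ := hroots lam hlam
    have e1' : Xm lam ^ 3 - Xm lam = lam := by linarith
    have e2' : X0 lam ^ 3 - X0 lam = lam := by linarith
    have e3' : Xp lam ^ 3 - Xp lam = lam := by linarith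
    have hloc := hyst_roots_loc h1 h2 e1' e2' e3'
    have hle : |lam| ≤ c := le_of_lt hlam
    have hmem := hystP_mem hle
    have hroot := hystP_root hle
    exact hyst_inj (le_of_lt hloc.2) hmem.1 (by rw [e3', hroot])
  have hXm : ∀ lam : ℝ, |lam| < c → Xm lam = -hystP (-lam) := by
    intro lam hlam
    obtain ⟨h1, h2, e1, e2, e3⟩ := hroots lam hlam
    have e1' : Xm lam ^ 3 - Xm lam = lam := by linarith
    have e2' : X0 lam ^ 3 - X0 lam = lam := by linarith
    have e3' : Xp lam ^ 3 - Xp lam = lam := by linarith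
    have hloc := hyst_roots_loc h1 h2 e1' e2' e3'
    have hle : |(-lam)| ≤ c := by rw [abs_neg]; exact le_of_lt hlam
    have hmem := hystP_mem hle
    have hroot := hystP_root hle
    have hr : (-Xm lam) ^ 3 - (-Xm lam) = -lam := by linear_combination -e1'
    have hinj : -Xm lam = hystP (-lam) :=
      hyst_inj (by linarith [hloc.1]) hmem.1 (by rw [hr, hroot])
    linarith [hinj]
  have hae : ∀ᵐ x : ℝ, x ≠ c := by
    have h0 : MeasureTheory.volume ({c} : Set ℝ) = 0 := MeasureTheory.measure_singleton c
    rw [MeasureTheory.ae_iff]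
    simpa using h0
  have hcongr : ∫ lam in (-c)..c, (Xp lam - Xm lam) =
      ∫ lam in (-c)..c, (hystP lam + hystP (-lam)) := by
    apply intervalIntegral.integral_congr_ae
    filter_upwards [hae] with x hx hxI
    rw [Set.uIoc_of_le (by linarith : -c ≤ c)] at hxI
    have habs : |x| < c := abs_lt.mpr ⟨hxI.1, lt_of_le_of_ne hxI.2 hx⟩
    rw [hXp x habs, hXm x habs]
    ring
  rw [hcongr]
  have hint1 : IntervalIntegrable hystP MeasureTheory.volume (-c) c :=
    hystP_continuous.intervalIntegrable _ _
  have hint2 : IntervalIntegrable (fun lam => hystP (-lam)) MeasureTheory.volume (-c) c :=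
    (hystP_continuous.comp continuous_neg).intervalIntegrable _ _
  rw [intervalIntegral.integral_add hint1 hint2]
  have hneg : ∫ lam in (-c)..c, hystP (-lam) = ∫ lam in (-c)..c, hystP lam := by
    rw [intervalIntegral.integral_comp_neg hystP, neg_neg]
  rw [hneg, hcdef, hystP_integral]
  norm_num
end

section
/- Let a : [t₀, t] → ℝ be continuous with a(s) ≤ -c < 0 on [t₀, t] and α(t,s) = ∫ₛᵗ a(u) du. Define ζ(t) = (1/(2|a(t₀)|)) e^{2α(t,t₀)/ε} + (1/ε) ∫_{t₀}^t e^{2α(t,s)/ε} ds. Then ζ(t) ≤ 1/(2c) + e^{-2c(t-t₀)/ε}/(2|a(t₀)|); in particular ζ(t) ≤ 1/(2c) + 1/(2|a(t₀)|). -/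
/-- Bound on the path-spreading function
`ζ(t) = e^{2α(t,t₀)/ε}/(2|a(t₀)|) + (1/ε)∫_{t₀}^t e^{2α(t,s)/ε} ds`
when `a ≤ -c < 0` on `[t₀, t]`. -/
theorem zeta_bound_stable
    (a : ℝ → ℝ) (t₀ t c ε : ℝ)
    (ht : t₀ ≤ t) (hc : 0 < c) (hε : 0 < ε)
    (hcont : ContinuousOn a (Set.Icc t₀ t))
    (hneg : ∀ s ∈ Set.Icc t₀ t, a s ≤ -c) :
    (1 / (2 * |a t₀|)) * Real.exp (2 * (∫ u in t₀..t, a u) / ε)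
      + (1 / ε) * ∫ s in t₀..t, Real.exp (2 * (∫ u in s..t, a u) / ε)
      ≤ 1 / (2 * c) + Real.exp (-2 * c * (t - t₀) / ε) / (2 * |a t₀|) ∧
    (1 / (2 * |a t₀|)) * Real.exp (2 * (∫ u in t₀..t, a u) / ε)
      + (1 / ε) * ∫ s in t₀..t, Real.exp (2 * (∫ u in s..t, a u) / ε)
      ≤ 1 / (2 * c) + 1 / (2 * |a t₀|) := by
  have ht₀mem : t₀ ∈ Set.Icc t₀ t := ⟨le_refl _, ht⟩
  have ha0 : a t₀ ≤ -c := hneg t₀ ht₀mem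
  have habspos : 0 < |a t₀| := by
    rw [abs_of_neg (by linarith)]; linarith
  -- integrability of a on subintervals
  have hIntR : ∀ s ∈ Set.Icc t₀ t, IntervalIntegrable a MeasureTheory.volume s t := by
    intro s hs
    apply ContinuousOn.intervalIntegrable
    apply hcont.mono
    rw [Set.uIcc_of_le hs.2]
    exact Set.Icc_subset_Icc hs.1 le_rfl
  -- key pointwise bound on the integral of a
  have hkey : ∀ s ∈ Set.Icc t₀ t, (∫ u in s..t, a u) ≤ -c * (t - s) := by
    intro s hs
    have h1 : (∫ u in s..t, a u) ≤ ∫ u in s..t, (-c : ℝ) := by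
      apply intervalIntegral.integral_mono_on hs.2 (hIntR s hs) intervalIntegrable_const
      intro x hx
      exact hneg x ⟨le_trans hs.1 hx.1, hx.2⟩
    simpa [mul_comm] using h1
  -- pointwise bound on the exponential
  have hexp : ∀ s ∈ Set.Icc t₀ t,
      Real.exp (2 * (∫ u in s..t, a u) / ε) ≤ Real.exp (-2 * c * (t - s) / ε) := by
    intro s hs
    apply Real.exp_le_exp.mpr
    have h0 := hkey s hs
    have h2 : 2 * (∫ u in s..t, a u) ≤ -2 * c * (t - s) := by linarith
    gcongr
  -- continuity / integrability of the integrand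
  have hLcont : ContinuousOn (fun s => ∫ u in s..t, a u) (Set.Icc t₀ t) := by
    have hIntOn : MeasureTheory.IntegrableOn a (Set.uIcc t₀ t) := by
      rw [Set.uIcc_of_le ht]; exact hcont.integrableOn_Icc
    have := intervalIntegral.continuousOn_primitive_interval_left hIntOn
    rwa [Set.uIcc_of_le ht] at this
  have hgcont : ContinuousOn (fun s => Real.exp (2 * (∫ u in s..t, a u) / ε))
      (Set.Icc t₀ t) :=
    Real.continuous_exp.comp_continuousOn ((continuousOn_const.mul hLcont).div_const ε)
  have hgInt : IntervalIntegrable (fun s => Real.exp (2 * (∫ u in s..t, a u) / ε))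
      MeasureTheory.volume t₀ t := by
    apply ContinuousOn.intervalIntegrable
    rwa [Set.uIcc_of_le ht]
  have hbcont : Continuous (fun s => Real.exp (-2 * c * (t - s) / ε)) := by
    fun_prop
  -- compare the integrals
  have hmono : (∫ s in t₀..t, Real.exp (2 * (∫ u in s..t, a u) / ε))
      ≤ ∫ s in t₀..t, Real.exp (-2 * c * (t - s) / ε) :=
    intervalIntegral.integral_mono_on ht hgInt (hbcont.intervalIntegrable t₀ t) hexp
  -- compute the comparison integral
  have hd : ∀ s ∈ Set.uIcc t₀ t,
      HasDerivAt (fun s => ε / (2 * c) * Real.exp (-2 * c * (t - s) / ε))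
        (Real.exp (-2 * c * (t - s) / ε)) s := by
    intro s _
    have h1 : HasDerivAt (fun s : ℝ => -2 * c * (t - s) / ε) (2 * c / ε) s := by
      have h2 : HasDerivAt (fun s : ℝ => -2 * c * (t - s) / ε)
          (-2 * c * (0 - 1) / ε) s :=
        (((hasDerivAt_const s t).sub (hasDerivAt_id s)).const_mul (-2 * c)).div_const ε
      convert h2 using 1; ring
    have h2 : HasDerivAt (fun y => ε / (2 * c) * Real.exp (-2 * c * (t - y) / ε))
        (ε / (2 * c) * (Real.exp (-2 * c * (t - s) / ε) * (2 * c / ε))) s :=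
      (h1.exp).const_mul (ε / (2 * c))
    convert h2 using 1
    field_simp
  have hcalc : (∫ s in t₀..t, Real.exp (-2 * c * (t - s) / ε))
      = ε / (2 * c) * Real.exp (-2 * c * (t - t) / ε)
        - ε / (2 * c) * Real.exp (-2 * c * (t - t₀) / ε) :=
    intervalIntegral.integral_eq_sub_of_hasDerivAt hd (hbcont.intervalIntegrable t₀ t)
  set E := Real.exp (-2 * c * (t - t₀) / ε) with hE
  have hcalc' : (∫ s in t₀..t, Real.exp (-2 * c * (t - s) / ε))
      = ε / (2 * c) * (1 - E) := by
    rw [hcalc]; simp; ring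
  -- first summand bound
  have hfirst : Real.exp (2 * (∫ u in t₀..t, a u) / ε) ≤ E := hexp t₀ ht₀mem
  have hEpos : 0 < E := Real.exp_pos _
  have hEle1 : E ≤ 1 := by
    rw [hE]
    apply Real.exp_le_one_iff.mpr
    have h3 : 0 ≤ 2 * c * (t - t₀) := by
      have : 0 ≤ t - t₀ := by linarith
      positivity
    have h4 : -2 * c * (t - t₀) ≤ 0 := by linarith
    exact div_nonpos_of_nonpos_of_nonneg h4 hε.le
  have hA : (1 / (2 * |a t₀|)) * Real.exp (2 * (∫ u in t₀..t, a u) / ε)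
      ≤ E / (2 * |a t₀|) := by
    rw [show E / (2 * |a t₀|) = 1 / (2 * |a t₀|) * E by ring]
    exact mul_le_mul_of_nonneg_left hfirst (by positivity)
  have hB : (1 / ε) * (∫ s in t₀..t, Real.exp (2 * (∫ u in s..t, a u) / ε))
      ≤ (1 - E) / (2 * c) := by
    calc (1 / ε) * (∫ s in t₀..t, Real.exp (2 * (∫ u in s..t, a u) / ε))
        ≤ (1 / ε) * (∫ s in t₀..t, Real.exp (-2 * c * (t - s) / ε)) :=
          mul_le_mul_of_nonneg_left hmono (by positivity)
      _ = (1 - E) / (2 * c) := by rw [hcalc']; field_simp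
  have hB' : (1 / ε) * (∫ s in t₀..t, Real.exp (2 * (∫ u in s..t, a u) / ε))
      ≤ 1 / (2 * c) := by
    have h5 : (1 - E) / (2 * c) ≤ 1 / (2 * c) := by gcongr; linarith
    linarith
  constructor
  · linarith
  · have hA' : E / (2 * |a t₀|) ≤ 1 / (2 * |a t₀|) := by gcongr
    linarith
end

section
/- Let a : [t₀, t₁] → ℝ be continuous with -c₂ ≤ a(s) ≤ -c₁ < 0, let α(t,s) = ∫ₛᵗ a(u) du, let λ' be continuous with |λ'| ≤ Λ on [t₀, t₁], and set g(t,s) = -∫ₛᵗ e^{α(u,s)/ε} λ'(u) du. Then |g(t,s)| ≤ (ε/c₁) Λ for all t₀ ≤ s ≤ t ≤ t₁, and consequently (1/ε²) ∫_{t₀}^{t} g(t,s)² ds ≤ Λ² (t - t₀)/c₁². -/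
lemma exp_integral_bound' (k T : ℝ) (hk : k < 0) (hT : 0 ≤ T) :
    ∫ u in (0:ℝ)..T, Real.exp (k * u) ≤ (-k)⁻¹ := by
  have hk0 : k ≠ 0 := hk.ne
  have hcalc : (∫ u in (0:ℝ)..T, Real.exp (k * u))
      = k⁻¹ * (Real.exp (k * T) - 1) := by
    rw [intervalIntegral.integral_comp_mul_left Real.exp hk0]
    simp [integral_exp, smul_eq_mul]
  rw [hcalc]
  have h1 : 0 < Real.exp (k * T) := Real.exp_pos _
  have hnk : 0 < -k := by linarith
  have heq : k⁻¹ * (Real.exp (k * T) - 1) = (1 - Real.exp (k * T)) / (-k) := by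
    field_simp
    ring
  rw [heq]
  calc (1 - Real.exp (k * T)) / (-k) ≤ 1 / (-k) := by
        apply div_le_div_of_nonneg_right ?_ hnk.le |>.trans le_rfl
        · linarith
    _ = (-k)⁻¹ := one_div _

lemma kernel_g_pointwise
    (a l : ℝ → ℝ) (t₀ t₁ c₁ Λ ε : ℝ)
    (hc₁ : 0 < c₁) (hε : 0 < ε) (ht : t₀ ≤ t₁)
    (ha_cont : ContinuousOn a (Set.Icc t₀ t₁))
    (ha : ∀ s ∈ Set.Icc t₀ t₁, a s ≤ -c₁)
    (hl_cont : ContinuousOn l (Set.Icc t₀ t₁))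
    (hl : ∀ s ∈ Set.Icc t₀ t₁, |l s| ≤ Λ) :
    ∀ s t : ℝ, t₀ ≤ s → s ≤ t → t ≤ t₁ →
      |(-∫ u in s..t, Real.exp ((∫ v in s..u, a v) / ε) * l u)| ≤ (ε / c₁) * Λ := by
  intro s t hs hst ht1
  have hΛ : 0 ≤ Λ := le_trans (abs_nonneg _) (hl t₀ ⟨le_rfl, ht⟩)
  have hsub : Set.Icc s t ⊆ Set.Icc t₀ t₁ := Set.Icc_subset_Icc hs ht1
  set k : ℝ := -(c₁ / ε) with hkdef
  have hk : k < 0 := by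
    have : 0 < c₁ / ε := div_pos hc₁ hε
    rw [hkdef]; linarith
  set f : ℝ → ℝ := fun u => Real.exp ((∫ v in s..u, a v) / ε) * l u with hfdef
  have haInt : MeasureTheory.IntegrableOn a (Set.Icc s t) :=
    (ha_cont.mono hsub).integrableOn_Icc
  have hFcont : ContinuousOn (fun u => ∫ v in s..u, a v) (Set.Icc s t) := by
    have := intervalIntegral.continuousOn_primitive_interval
      (f := a) (a := s) (b := t) (μ := MeasureTheory.volume)
      (by rwa [Set.uIcc_of_le hst])
    rwa [Set.uIcc_of_le hst] at this
  have hfcont : ContinuousOn f (Set.Icc s t) :=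
    (Real.continuous_exp.comp_continuousOn (hFcont.div_const ε)).mul
      (hl_cont.mono hsub)
  have hfint : IntervalIntegrable f MeasureTheory.volume s t :=
    hfcont.intervalIntegrable_of_Icc hst
  -- pointwise bound on |f u|
  have hpt : ∀ u ∈ Set.Icc s t, |f u| ≤ Λ * Real.exp (k * (u - s)) := by
    intro u hu
    have haint : IntervalIntegrable a MeasureTheory.volume s u := by
      apply MeasureTheory.IntegrableOn.intervalIntegrable
      rw [Set.uIcc_of_le hu.1]
      exact haInt.mono_set (Set.Icc_subset_Icc le_rfl hu.2)
    have hInt : (∫ v in s..u, a v) ≤ -c₁ * (u - s) := by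
      have h1 : (∫ v in s..u, a v) ≤ ∫ _ in s..u, (-c₁ : ℝ) :=
        intervalIntegral.integral_mono_on hu.1 haint intervalIntegrable_const
          (fun v hv => ha v (hsub ⟨hv.1, hv.2.trans hu.2⟩))
      simpa [mul_comm] using h1
    have hexp : Real.exp ((∫ v in s..u, a v) / ε) ≤ Real.exp (k * (u - s)) := by
      apply Real.exp_le_exp.2
      have : k * (u - s) = (-c₁ * (u - s)) / ε := by rw [hkdef]; ring
      rw [this]
      exact div_le_div_of_nonneg_right hInt hε.le |>.trans le_rfl
    calc |f u| = Real.exp ((∫ v in s..u, a v) / ε) * |l u| := by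
          rw [hfdef]; simp [abs_mul, abs_of_pos (Real.exp_pos _)]
      _ ≤ Real.exp (k * (u - s)) * Λ :=
          mul_le_mul hexp (hl u ⟨hs.trans hu.1, hu.2.trans ht1⟩) (abs_nonneg _)
            (Real.exp_pos _).le
      _ = Λ * Real.exp (k * (u - s)) := mul_comm _ _
  rw [abs_neg]
  calc |∫ u in s..t, f u| ≤ ∫ u in s..t, |f u| :=
        intervalIntegral.abs_integral_le_integral_abs hst
    _ ≤ ∫ u in s..t, Λ * Real.exp (k * (u - s)) :=
        intervalIntegral.integral_mono_on hst hfint.abs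
          ((Continuous.intervalIntegrable (by continuity) s t)) hpt
    _ = Λ * ∫ u in s..t, Real.exp (k * (u - s)) := by
        rw [intervalIntegral.integral_const_mul]
    _ ≤ Λ * (-k)⁻¹ := by
        apply mul_le_mul_of_nonneg_left ?_ hΛ
        have hcv : (∫ u in s..t, Real.exp (k * (u - s)))
            = ∫ w in (0:ℝ)..(t - s), Real.exp (k * w) := by
          have := intervalIntegral.integral_comp_sub_right
            (fun w => Real.exp (k * w)) s (a := s) (b := t)
          simpa [sub_self] using this
        rw [hcv]
        exact exp_integral_bound' k (t - s) hk (by linarith)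
    _ = (ε / c₁) * Λ := by
        rw [hkdef]
        rw [neg_neg, inv_div]
        ring

/-- Bound on the kernel `g(t,s) = -∫ₛᵗ e^{α(u,s)/ε} λ'(u) du` when
`-c₂ ≤ a ≤ -c₁ < 0` and `|λ'| ≤ Λ`, and the resulting bound on
`Γ(t,t₀) = (1/ε²) ∫ g(t,s)² ds`. -/
theorem kernel_g_bound
    (a l : ℝ → ℝ) (t₀ t₁ c₁ c₂ Λ ε : ℝ)
    (hc₁ : 0 < c₁) (hε : 0 < ε) (ht : t₀ ≤ t₁)
    (ha_cont : ContinuousOn a (Set.Icc t₀ t₁))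
    (ha : ∀ s ∈ Set.Icc t₀ t₁, -c₂ ≤ a s ∧ a s ≤ -c₁)
    (hl_cont : ContinuousOn l (Set.Icc t₀ t₁))
    (hl : ∀ s ∈ Set.Icc t₀ t₁, |l s| ≤ Λ) :
    (∀ s t : ℝ, t₀ ≤ s → s ≤ t → t ≤ t₁ →
      |(-∫ u in s..t, Real.exp ((∫ v in s..u, a v) / ε) * l u)| ≤ (ε / c₁) * Λ) ∧
    (∀ t : ℝ, t₀ ≤ t → t ≤ t₁ →
      (1 / ε ^ 2) * ∫ s in t₀..t,
          (-∫ u in s..t, Real.exp ((∫ v in s..u, a v) / ε) * l u) ^ 2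
        ≤ Λ ^ 2 * (t - t₀) / c₁ ^ 2) := by
  have key := kernel_g_pointwise a l t₀ t₁ c₁ Λ ε hc₁ hε ht ha_cont
    (fun s hs => (ha s hs).2) hl_cont hl
  refine ⟨key, ?_⟩
  intro t ht0 ht1'
  have hb : ∀ s ∈ Set.uIoc t₀ t,
      ‖(-∫ u in s..t, Real.exp ((∫ v in s..u, a v) / ε) * l u) ^ 2‖
        ≤ ((ε / c₁) * Λ) ^ 2 := by
    intro s hsm
    rw [Set.uIoc_of_le ht0] at hsm
    have h := key s t hsm.1.le hsm.2 ht1'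
    rw [Real.norm_eq_abs, abs_pow, ← sq_abs]
    exact pow_le_pow_left₀ (abs_nonneg _) (by simpa using h) 2
  have hmain := intervalIntegral.norm_integral_le_of_norm_le_const hb
  rw [Real.norm_eq_abs, abs_of_nonneg (sub_nonneg.2 ht0)] at hmain
  have hstep : (∫ s in t₀..t,
      (-∫ u in s..t, Real.exp ((∫ v in s..u, a v) / ε) * l u) ^ 2)
      ≤ ((ε / c₁) * Λ) ^ 2 * (t - t₀) := (le_abs_self _).trans hmain
  have hεsq : (0:ℝ) < ε ^ 2 := by positivity
  calc (1 / ε ^ 2) * ∫ s in t₀..t,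
          (-∫ u in s..t, Real.exp ((∫ v in s..u, a v) / ε) * l u) ^ 2
      ≤ (1 / ε ^ 2) * (((ε / c₁) * Λ) ^ 2 * (t - t₀)) :=
        mul_le_mul_of_nonneg_left hstep (by positivity)
    _ = Λ ^ 2 * (t - t₀) / c₁ ^ 2 := by
        field_simp
end
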